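/- For ζ ∈ ℝ \ {0} and 0 < |x| < 1/2, the truncated oscillatory integral I(x) = ζ ∫_2^{1/|x|} λ^{-1-iζ} e^{iλx} dλ satisfies |I(x)| ≤ C(1 + |ζ|) for an absolute constant C. In particular it is bounded uniformly in x, in contrast with the case ζ = 0 where ∫_2^{1/|x|} λ^{-1} dλ = log(1/(2|x|)) blows up. -/

import Mathlib

open Complex MeasureTheory

private lemma hasDerivAt_cpow_real (c : ℂ) {t : ℝ} (ht : 0 < t) :
    HasDerivAt (fun y : ℝ => (y : ℂ) ^ c) (c * (t : ℂ) ^ (c - 1)) t := by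
  have h : HasDerivAt (fun w : ℂ => w ^ c) (c * (t : ℂ) ^ (c - 1)) (t : ℂ) := by
    simpa using (hasDerivAt_id ((t : ℂ))).cpow_const (by exact Or.inl (by exact_mod_cast ht))
  exact h.comp_ofReal

private lemma hasDerivAt_cexp_real (x : ℝ) (t : ℝ) :
    HasDerivAt (fun y : ℝ => Complex.exp (Complex.I * y * x))
      (Complex.I * x * Complex.exp (Complex.I * t * x)) t := by
  have h : HasDerivAt (fun w : ℂ => Complex.exp (Complex.I * w * x))
      (Complex.I * x * Complex.exp (Complex.I * t * x)) (t : ℂ) := by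
    have := (((hasDerivAt_id ((t : ℂ))).const_mul Complex.I).mul_const (x : ℂ)).cexp
    simpa [mul_comm, mul_assoc, mul_left_comm] using this
  exact h.comp_ofReal

/-- The truncated oscillatory integral `I(x) = ζ ∫_2^{1/|x|} λ^{-1-iζ} e^{iλx} dλ`
is bounded by `C(1+|ζ|)` with an absolute constant `C`. -/
theorem truncated_oscillatory_integral_bound :
    ∃ C : ℝ, 0 ≤ C ∧ ∀ ζ : ℝ, ζ ≠ 0 → ∀ x : ℝ, 0 < |x| → |x| < 1 / 2 →
      ‖(ζ : ℂ) * ∫ lam in Set.Ioc (2 : ℝ) (1 / |x|),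
          (lam : ℂ) ^ (-1 - Complex.I * ζ) * Complex.exp (Complex.I * lam * x)‖ ≤
        C * (1 + |ζ|) := by
  refine ⟨3, by norm_num, fun ζ hζ x hx hx2 => ?_⟩
  set b : ℝ := 1 / |x| with hb
  have hb2 : 2 < b := by
    rw [hb, lt_div_iff₀ hx]
    linarith
  have hb0 : 0 < b := by linarith
  -- positivity on interval
  have hpos : ∀ t ∈ Set.uIcc (2 : ℝ) b, 0 < t := by
    intro t ht
    rw [Set.uIcc_of_le hb2.le] at ht
    linarith [ht.1]
  set g : ℝ → ℂ := fun t => (t : ℂ) ^ (-(Complex.I * ζ)) * Complex.exp (Complex.I * t * x)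
    with hg
  set f1 : ℝ → ℂ := fun t => (t : ℂ) ^ (-1 - Complex.I * ζ) * Complex.exp (Complex.I * t * x)
    with hf1
  set f2 : ℝ → ℂ := fun t => (t : ℂ) ^ (-(Complex.I * ζ)) * Complex.exp (Complex.I * t * x)
    with hf2
  have hderiv : ∀ t ∈ Set.uIcc (2 : ℝ) b,
      HasDerivAt g ((-(Complex.I * ζ)) * f1 t + (Complex.I * x) * f2 t) t := by
    intro t ht
    have ht0 := hpos t ht
    have h1 := hasDerivAt_cpow_real (-(Complex.I * ζ)) ht0
    have h2 := hasDerivAt_cexp_real x t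
    have := h1.mul h2
    rw [hg]
    convert this using 1
    · rfl
    · rfl
    rw [hf1, hf2]
    have : -(Complex.I * ζ) - 1 = -1 - Complex.I * ζ := by ring
    rw [this]
    ring
  -- continuity / integrability facts
  have hcont1 : ContinuousOn f1 (Set.uIcc (2 : ℝ) b) := by
    intro t ht
    have ht0 := hpos t ht
    exact (((hasDerivAt_cpow_real (-1 - Complex.I * ζ) ht0).continuousAt).mul
      (hasDerivAt_cexp_real x t).continuousAt).continuousWithinAt
  have hcont2 : ContinuousOn f2 (Set.uIcc (2 : ℝ) b) := by
    intro t ht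
    have ht0 := hpos t ht
    exact (((hasDerivAt_cpow_real (-(Complex.I * ζ)) ht0).continuousAt).mul
      (hasDerivAt_cexp_real x t).continuousAt).continuousWithinAt
  have hi1 : IntervalIntegrable f1 volume 2 b := hcont1.intervalIntegrable
  have hi2 : IntervalIntegrable f2 volume 2 b := hcont2.intervalIntegrable
  have hftc : ∫ t in (2:ℝ)..b, ((-(Complex.I * ζ)) * f1 t + (Complex.I * x) * f2 t)
      = g b - g 2 :=
    intervalIntegral.integral_eq_sub_of_hasDerivAt hderiv
      (((hi1.const_mul _)).add ((hi2.const_mul _)))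
  rw [intervalIntegral.integral_add (hi1.const_mul _) (hi2.const_mul _),
    intervalIntegral.integral_const_mul, intervalIntegral.integral_const_mul] at hftc
  -- the set integral equals the interval integral
  have hset : (∫ lam in Set.Ioc (2 : ℝ) b,
      (lam : ℂ) ^ (-1 - Complex.I * ζ) * Complex.exp (Complex.I * lam * x))
      = ∫ t in (2:ℝ)..b, f1 t := by
    rw [intervalIntegral.integral_of_le hb2.le]
  rw [hset]
  -- key identity: ζ * J = I * ((-(I ζ)) * J)
  have hIJ : (ζ : ℂ) * ∫ t in (2:ℝ)..b, f1 t
      = Complex.I * ((-(Complex.I * ζ)) * ∫ t in (2:ℝ)..b, f1 t) := by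
    have : Complex.I * -(Complex.I * ζ) = (ζ : ℂ) := by
      rw [mul_neg, ← mul_assoc, Complex.I_mul_I]; ring
    rw [← mul_assoc, this]
  have heq : (-(Complex.I * ζ)) * ∫ t in (2:ℝ)..b, f1 t
      = g b - g 2 - (Complex.I * x) * ∫ t in (2:ℝ)..b, f2 t := by
    rw [← hftc]; ring
  rw [hIJ, heq]
  -- norm bounds
  have hnormg : ∀ t ∈ Set.uIcc (2 : ℝ) b, ‖g t‖ = 1 := by
    intro t ht
    have ht0 := hpos t ht
    show ‖(t : ℂ) ^ (-(Complex.I * ζ)) * Complex.exp (Complex.I * t * x)‖ = 1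
    rw [norm_mul, Complex.norm_exp,
      Complex.norm_cpow_eq_rpow_re_of_pos ht0]
    simp [Complex.mul_re]
  have hnormf2 : ∀ t ∈ Set.uIoc (2 : ℝ) b, ‖f2 t‖ ≤ 1 := by
    intro t ht
    have ht' : t ∈ Set.uIcc (2 : ℝ) b := Set.uIoc_subset_uIcc ht
    exact le_of_eq (hnormg t ht')
  have hK : ‖∫ t in (2:ℝ)..b, f2 t‖ ≤ 1 * |b - 2| :=
    intervalIntegral.norm_integral_le_of_norm_le_const hnormf2
  have hxb : |x| * b = 1 := by
    rw [hb]; field_simp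
  have hnormK : ‖(Complex.I * x) * ∫ t in (2:ℝ)..b, f2 t‖ ≤ 1 := by
    rw [norm_mul, norm_mul]
    have h1 : ‖(Complex.I : ℂ)‖ = 1 := by simp
    have h2 : ‖(x : ℂ)‖ = |x| := by simp [Complex.norm_real, Real.norm_eq_abs]
    rw [h1, h2, one_mul]
    calc |x| * ‖∫ t in (2:ℝ)..b, f2 t‖ ≤ |x| * (1 * |b - 2|) := by
          exact mul_le_mul_of_nonneg_left hK (abs_nonneg x)
      _ = |x| * (b - 2) := by rw [one_mul, _root_.abs_of_nonneg (by linarith : (0:ℝ) ≤ b - 2)]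
      _ ≤ |x| * b := by nlinarith [abs_nonneg x]
      _ = 1 := hxb
  have hgb : ‖g b‖ = 1 := hnormg b (Set.right_mem_uIcc)
  have hg2 : ‖g 2‖ = 1 := hnormg 2 (Set.left_mem_uIcc)
  calc ‖Complex.I * (g b - g 2 - (Complex.I * x) * ∫ t in (2:ℝ)..b, f2 t)‖
      = ‖g b - g 2 - (Complex.I * x) * ∫ t in (2:ℝ)..b, f2 t‖ := by
        rw [norm_mul]; simp
    _ ≤ ‖g b - g 2‖ + ‖(Complex.I * x) * ∫ t in (2:ℝ)..b, f2 t‖ := norm_sub_le _ _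
    _ ≤ (‖g b‖ + ‖g 2‖) + 1 := add_le_add (norm_sub_le _ _) hnormK
    _ = 3 := by rw [hgb, hg2]; norm_num
    _ ≤ 3 * (1 + |ζ|) := by nlinarith [abs_nonneg ζ]
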